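/- Let M be a monoid and let M⁰ denote the monoid obtained from M by adjoining a new zero element 0. Then the diagonal M-act is finitely presented if and only if the diagonal M⁰-act is finitely presented. -/

import Mathlib

/-- The axioms for a right action of a monoid `M` on a set `A`:
`act a 1 = a` and `act a (m * n) = act (act a m) n`. -/
def IsAct {M A : Type*} [Monoid M] (act : A → M → A) : Prop :=
  (∀ a, act a 1 = a) ∧ ∀ a m n, act a (m * n) = act (act a m) n

/-- `U ⊆ A` is a generating set for the act `(A, act)`: every element of `A`
has the form `u m` with `u ∈ U`, `m ∈ M`. -/
def Generates {M A : Type*} (act : A → M → A) (U : Set A) : Prop :=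
  ∀ a : A, ∃ u ∈ U, ∃ m : M, act u m = a

/-- An act is finitely generated if it has a finite generating set. -/
def ActFG {M A : Type*} (act : A → M → A) : Prop :=
  ∃ U : Set A, U.Finite ∧ Generates act U

/-- The free `M`-act on a set `X`: the set `X × M` with action `(x, m) n = (x, m n)`. -/
def FreeAct (M : Type*) [Monoid M] (X : Type*) : X × M → M → X × M :=
  fun p m => (p.1, p.2 * m)

/-- The congruence on the act `(A, act)` generated by a set `R ⊆ A × A`:
the smallest equivalence relation containing `R` that is compatible with the action. -/
def CongGen {M A : Type*} (act : A → M → A) (R : Set (A × A)) (a b : A) : Prop :=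
  ∀ r : A → A → Prop, Equivalence r →
    (∀ x y (m : M), r x y → r (act x m) (act y m)) →
    (∀ p ∈ R, r p.1 p.2) → r a b

/-- An `M`-act `(A, act)` is finitely presented if it is defined by a presentation
`⟨X | R⟩` with `X` and `R` finite, i.e. there is a surjective `M`-equivariant map
`π : F_X → A` whose kernel is the congruence on `F_X` generated by `R`. -/
def ActFP (M : Type*) [Monoid M] {A : Type*} (act : A → M → A) : Prop :=
  ∃ (X : Type) (_ : Finite X) (R : Set ((X × M) × (X × M))), R.Finite ∧
    ∃ π : X × M → A, Function.Surjective π ∧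
      (∀ p m, π (FreeAct M X p m) = act (π p) m) ∧
      ∀ w₁ w₂ : X × M, π w₁ = π w₂ ↔ CongGen (FreeAct M X) R w₁ w₂

/-- The diagonal `M`-act: `M × M` with action `(a, b) c = (a c, b c)`. -/
def DiagAct (M : Type*) [Monoid M] : M × M → M → M × M :=
  fun p c => (p.1 * c, p.2 * c)

set_option linter.unusedSectionVars false

section CongGenLemmas
variable {M A : Type*} [Monoid M] {act : A → M → A} {R : Set (A × A)}

lemma congGen_refl (a : A) : CongGen act R a a := fun _ hr _ _ => hr.refl a
lemma congGen_symm {a b : A} (h : CongGen act R a b) : CongGen act R b a :=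
  fun r hr hact hR => hr.symm (h r hr hact hR)
lemma congGen_trans {a b c : A} (h1 : CongGen act R a b) (h2 : CongGen act R b c) :
    CongGen act R a c :=
  fun r hr hact hR => hr.trans (h1 r hr hact hR) (h2 r hr hact hR)
lemma congGen_of_mem {p : A × A} (hp : p ∈ R) : CongGen act R p.1 p.2 :=
  fun _ _ _ hR => hR p hp
lemma congGen_of_mem' {a b : A} (hp : (a, b) ∈ R) : CongGen act R a b :=
  congGen_of_mem hp
lemma congGen_act {a b : A} (h : CongGen act R a b) (m : M) :
    CongGen act R (act a m) (act b m) :=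
  fun r hr hact hR => hact a b m (h r hr hact hR)
end CongGenLemmas

lemma WithZero.zeroOrCoe {M : Type*} (x : WithZero M) : x = 0 ∨ ∃ a : M, x = ↑a :=
  WithZero.cases_on x (Or.inl rfl) (fun a => Or.inr ⟨a, rfl⟩)

lemma mulNeZeroLeft {M : Type*} [Monoid M] {u v : WithZero M} (h : u * v ≠ 0) : u ≠ 0 :=
  fun hu => h (by rw [hu, zero_mul])
lemma mulNeZeroRight {M : Type*} [Monoid M] {u v : WithZero M} (h : u * v ≠ 0) : v ≠ 0 :=
  fun hv => h (by rw [hv, mul_zero])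

section Forward
variable {M : Type*} [Monoid M] {X : Type}

open scoped Classical in
noncomputable def ExtPi (π : X × M → M × M) :
    (X ⊕ Bool) × WithZero M → WithZero M × WithZero M :=
  fun w =>
    match w.1 with
    | Sum.inl x => if h : w.2 = 0 then (0, 0) else
        (↑(π (x, WithZero.unzero h)).1, ↑(π (x, WithZero.unzero h)).2)
    | Sum.inr true => (w.2, 0)
    | Sum.inr false => (0, w.2)

lemma extPi_coe (π : X × M → M × M) (x : X) (m : M) :
    ExtPi π (Sum.inl x, ↑m) = (↑(π (x, m)).1, ↑(π (x, m)).2) := by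
  simp [ExtPi, WithZero.coe_ne_zero, WithZero.unzero_coe]

lemma extPi_zero (π : X × M → M × M) (g : X ⊕ Bool) :
    ExtPi π (g, 0) = (0, 0) := by
  rcases g with x | b
  · simp [ExtPi]
  · rcases b with _ | _ <;> rfl

lemma extPi_true (π : X × M → M × M) (c : WithZero M) :
    ExtPi π (Sum.inr true, c) = (c, 0) := rfl
lemma extPi_false (π : X × M → M × M) (c : WithZero M) :
    ExtPi π (Sum.inr false, c) = (0, c) := rfl
end Forward

lemma forward_dir {M : Type*} [Monoid M] (h : ActFP M (DiagAct M)) :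
    ActFP (WithZero M) (DiagAct (WithZero M)) := by
  obtain ⟨X, hX, R, hRfin, π, hsurj, hequiv, hker⟩ := h
  let ι : X × M → (X ⊕ Bool) × WithZero M := fun w => (Sum.inl w.1, (w.2 : WithZero M))
  have hι : ∀ (a : X × M) (m : M),
      ι (FreeAct M X a m) = FreeAct (WithZero M) (X ⊕ Bool) (ι a) ↑m := by
    intro a m
    show ((Sum.inl a.1 : X ⊕ Bool), (↑(a.2 * m) : WithZero M)) = (Sum.inl a.1, (a.2 : WithZero M) * (m : WithZero M))
    rw [WithZero.coe_mul]
  let R₀ : Set (((X ⊕ Bool) × WithZero M) × ((X ⊕ Bool) × WithZero M)) :=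
    (fun pq : (X × M) × (X × M) => (ι pq.1, ι pq.2)) '' R ∪
      Set.range (fun gg : (X ⊕ Bool) × (X ⊕ Bool) =>
        ((gg.1, (0 : WithZero M)), (gg.2, (0 : WithZero M))))
  have hR₀fin : R₀.Finite := (hRfin.image _).union (Set.finite_range _)
  have hequiv₀ : ∀ p m, ExtPi π (FreeAct (WithZero M) (X ⊕ Bool) p m)
      = DiagAct (WithZero M) (ExtPi π p) m := by
    rintro ⟨g, c⟩ m
    rcases g with x | b
    · rcases WithZero.zeroOrCoe c with rfl | ⟨c', rfl⟩
      · show ExtPi π (Sum.inl x, 0 * m) = DiagAct (WithZero M) (ExtPi π (Sum.inl x, 0)) m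
        rw [zero_mul, extPi_zero]
        simp [DiagAct]
      · rcases WithZero.zeroOrCoe m with rfl | ⟨m', rfl⟩
        · show ExtPi π (Sum.inl x, (c' : WithZero M) * 0)
              = DiagAct (WithZero M) (ExtPi π (Sum.inl x, ↑c')) 0
          rw [mul_zero, extPi_zero, extPi_coe]
          simp [DiagAct]
        · show ExtPi π (Sum.inl x, (c' : WithZero M) * ↑m')
              = DiagAct (WithZero M) (ExtPi π (Sum.inl x, ↑c')) ↑m'
          rw [← WithZero.coe_mul, extPi_coe, extPi_coe]
          have h1 : π (x, c' * m') = DiagAct M (π (x, c')) m' := hequiv (x, c') m'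
          rw [h1]
          simp [DiagAct, WithZero.coe_mul]
    · rcases b with _ | _
      · show ExtPi π (Sum.inr false, c * m) = DiagAct (WithZero M) (ExtPi π (Sum.inr false, c)) m
        rw [extPi_false, extPi_false]
        simp [DiagAct]
      · show ExtPi π (Sum.inr true, c * m) = DiagAct (WithZero M) (ExtPi π (Sum.inr true, c)) m
        rw [extPi_true, extPi_true]
        simp [DiagAct]
  have hsurj₀ : Function.Surjective (ExtPi π) := by
    rintro ⟨a, b⟩
    rcases WithZero.zeroOrCoe a with rfl | ⟨a', rfl⟩
    · exact ⟨(Sum.inr false, b), extPi_false π b⟩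
    · rcases WithZero.zeroOrCoe b with rfl | ⟨b', rfl⟩
      · exact ⟨(Sum.inr true, ↑a'), extPi_true π _⟩
      · obtain ⟨⟨x, m⟩, hxm⟩ := hsurj (a', b')
        exact ⟨(Sum.inl x, ↑m), by rw [extPi_coe, hxm]⟩
  have hker₁ : ∀ w₁ w₂, CongGen (FreeAct (WithZero M) (X ⊕ Bool)) R₀ w₁ w₂ →
      ExtPi π w₁ = ExtPi π w₂ := by
    intro w₁ w₂ hc
    refine hc (fun a b => ExtPi π a = ExtPi π b) ⟨fun _ => rfl, Eq.symm, Eq.trans⟩ ?_ ?_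
    · intro a b m hab
      rw [hequiv₀, hequiv₀, hab]
    · rintro p (⟨⟨⟨xu, mu⟩, ⟨xv, mv⟩⟩, huv, rfl⟩ | ⟨⟨g₁, g₂⟩, rfl⟩)
      · have hpi : π (xu, mu) = π (xv, mv) := (hker _ _).mpr (congGen_of_mem' huv)
        show ExtPi π (Sum.inl xu, ↑mu) = ExtPi π (Sum.inl xv, ↑mv)
        rw [extPi_coe, extPi_coe, hpi]
      · show ExtPi π (g₁, 0) = ExtPi π (g₂, 0)
        rw [extPi_zero, extPi_zero]
  have hker₂ : ∀ w₁ w₂, ExtPi π w₁ = ExtPi π w₂ →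
      CongGen (FreeAct (WithZero M) (X ⊕ Bool)) R₀ w₁ w₂ := by
    rintro ⟨g₁, c₁⟩ ⟨g₂, c₂⟩ heq
    rcases WithZero.zeroOrCoe c₁ with rfl | ⟨m₁, rfl⟩
    · rcases WithZero.zeroOrCoe c₂ with rfl | ⟨m₂, rfl⟩
      · exact congGen_of_mem' (Set.mem_union_right _ ⟨(g₁, g₂), rfl⟩)
      · exfalso
        rw [extPi_zero] at heq
        rcases g₂ with x | b
        · rw [extPi_coe] at heq
          exact WithZero.coe_ne_zero (congrArg Prod.fst heq).symm
        · rcases b with _ | _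
          · rw [extPi_false] at heq
            exact WithZero.coe_ne_zero (congrArg Prod.snd heq).symm
          · rw [extPi_true] at heq
            exact WithZero.coe_ne_zero (congrArg Prod.fst heq).symm
    · rcases WithZero.zeroOrCoe c₂ with rfl | ⟨m₂, rfl⟩
      · exfalso
        rw [extPi_zero] at heq
        rcases g₁ with x | b
        · rw [extPi_coe] at heq
          exact WithZero.coe_ne_zero (congrArg Prod.fst heq)
        · rcases b with _ | _
          · rw [extPi_false] at heq
            exact WithZero.coe_ne_zero (congrArg Prod.snd heq)
          · rw [extPi_true] at heq
            exact WithZero.coe_ne_zero (congrArg Prod.fst heq)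
      · rcases g₁ with x₁ | b₁ <;> rcases g₂ with x₂ | b₂
        · rw [extPi_coe, extPi_coe] at heq
          have hpi : π (x₁, m₁) = π (x₂, m₂) :=
            Prod.ext (WithZero.coe_inj.mp (congrArg Prod.fst heq))
              (WithZero.coe_inj.mp (congrArg Prod.snd heq))
          have hcg := (hker _ _).mp hpi
          exact hcg (fun a b => CongGen (FreeAct (WithZero M) (X ⊕ Bool)) R₀ (ι a) (ι b))
            ⟨fun a => congGen_refl _, congGen_symm, congGen_trans⟩
            (fun a b m hab => by
              show CongGen (FreeAct (WithZero M) (X ⊕ Bool)) R₀ (ι (FreeAct M X a m))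
                (ι (FreeAct M X b m))
              rw [hι, hι]; exact congGen_act hab _)
            (fun p hp => congGen_of_mem' (Set.mem_union_left _ ⟨p, hp, rfl⟩))
        · exfalso
          rw [extPi_coe] at heq
          rcases b₂ with _ | _
          · rw [extPi_false] at heq
            exact WithZero.coe_ne_zero (congrArg Prod.fst heq)
          · rw [extPi_true] at heq
            exact WithZero.coe_ne_zero (congrArg Prod.snd heq)
        · exfalso
          rw [extPi_coe] at heq
          rcases b₁ with _ | _
          · rw [extPi_false] at heq
            exact WithZero.coe_ne_zero (congrArg Prod.fst heq).symm
          · rw [extPi_true] at heq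
            exact WithZero.coe_ne_zero (congrArg Prod.snd heq).symm
        · rcases b₁ with _ | _ <;> rcases b₂ with _ | _
          · rw [extPi_false, extPi_false] at heq
            have : m₁ = m₂ := WithZero.coe_inj.mp (congrArg Prod.snd heq)
            subst this
            exact congGen_refl _
          · exfalso
            rw [extPi_false, extPi_true] at heq
            exact WithZero.coe_ne_zero (congrArg Prod.snd heq)
          · exfalso
            rw [extPi_true, extPi_false] at heq
            exact WithZero.coe_ne_zero (congrArg Prod.fst heq)
          · rw [extPi_true, extPi_true] at heq
            have : m₁ = m₂ := WithZero.coe_inj.mp (congrArg Prod.fst heq)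
            subst this
            exact congGen_refl _
  exact ⟨X ⊕ Bool, inferInstance, R₀, hR₀fin, ExtPi π, hsurj₀, hequiv₀,
    fun w₁ w₂ => ⟨hker₂ w₁ w₂, hker₁ w₁ w₂⟩⟩

lemma coe_of_ne {M : Type*} (x : WithZero M) (hx : x ≠ 0) : ∃ a : M, x = ↑a :=
  (WithZero.zeroOrCoe x).resolve_left hx

lemma backward_dir {M : Type*} [Monoid M] (h : ActFP (WithZero M) (DiagAct (WithZero M))) :
    ActFP M (DiagAct M) := by
  classical
  obtain ⟨X, hX, R, hRfin, π, hsurj, hequiv, hker⟩ := h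
  have key : ∀ (x : X) (c : WithZero M), π (x, c) = DiagAct (WithZero M) (π (x, 1)) c := by
    intro x c
    have h1 : FreeAct (WithZero M) X (x, 1) c = (x, c) := by simp [FreeAct]
    have := hequiv (x, 1) c
    rwa [h1] at this
  let X' : Type := {x : X // (π (x, 1)).1 ≠ 0 ∧ (π (x, 1)).2 ≠ 0}
  haveI : Finite X' := Subtype.finite
  let ι : X' × M → X × WithZero M := fun w => (w.1.1, (w.2 : WithZero M))
  have hιinj : Function.Injective ι := by
    rintro ⟨⟨x, hx⟩, m⟩ ⟨⟨y, hy⟩, n⟩ hxy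
    have h1 : x = y := congrArg Prod.fst hxy
    have h2 : (m : WithZero M) = n := congrArg Prod.snd hxy
    subst h1
    exact Prod.ext (by rfl) (WithZero.coe_inj.mp h2)
  -- generators have nonzero images
  have hx' : ∀ x' : X', ∃ uv : M × M, π (x'.1, 1) = (↑uv.1, ↑uv.2) := by
    rintro ⟨x, hx1, hx2⟩
    obtain ⟨u, hu⟩ := coe_of_ne _ hx1
    obtain ⟨v, hv⟩ := coe_of_ne _ hx2
    exact ⟨(u, v), Prod.ext hu hv⟩
  choose gen hgen using hx'
  let π' : X' × M → M × M := fun w => ((gen w.1).1 * w.2, (gen w.1).2 * w.2)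
  have hπ' : ∀ w : X' × M, π (ι w) = (↑(π' w).1, ↑(π' w).2) := by
    rintro ⟨x', m⟩
    show π (x'.1, (m : WithZero M)) = _
    rw [key, hgen x']
    show ((↑(gen x').1 * ↑m : WithZero M), (↑(gen x').2 * ↑m : WithZero M)) = _
    rw [← WithZero.coe_mul, ← WithZero.coe_mul]
  have hπ'iff : ∀ w₁ w₂ : X' × M, π' w₁ = π' w₂ ↔ π (ι w₁) = π (ι w₂) := by
    intro w₁ w₂
    constructor
    · intro hp
      rw [hπ' w₁, hπ' w₂, hp]
    · intro hp
      rw [hπ' w₁, hπ' w₂] at hp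
      exact Prod.ext (WithZero.coe_inj.mp (congrArg Prod.fst hp))
        (WithZero.coe_inj.mp (congrArg Prod.snd hp))
  -- surjectivity
  have hsurj' : Function.Surjective π' := by
    rintro ⟨a, b⟩
    obtain ⟨⟨x, c⟩, hxc⟩ := hsurj ((a : WithZero M), (b : WithZero M))
    rw [key] at hxc
    have hc : c ≠ 0 := by
      rintro rfl
      have h1 : (π (x, 1)).1 * 0 = (a : WithZero M) := congrArg Prod.fst hxc
      rw [mul_zero] at h1
      exact WithZero.coe_ne_zero h1.symm
    obtain ⟨c', rfl⟩ := coe_of_ne c hc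
    have h1 : (π (x, 1)).1 * ↑c' = (a : WithZero M) := congrArg Prod.fst hxc
    have h2 : (π (x, 1)).2 * ↑c' = (b : WithZero M) := congrArg Prod.snd hxc
    have hx1 : (π (x, 1)).1 ≠ 0 ∧ (π (x, 1)).2 ≠ 0 :=
      ⟨mulNeZeroLeft (by rw [h1]; exact WithZero.coe_ne_zero),
       mulNeZeroLeft (by rw [h2]; exact WithZero.coe_ne_zero)⟩
    refine ⟨(⟨x, hx1⟩, c'), ?_⟩
    have h3 : π (ι (⟨x, hx1⟩, c')) = ((a : WithZero M), (b : WithZero M)) := by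
      show π (x, (c' : WithZero M)) = _
      rw [key]
      exact hxc
    rw [hπ'] at h3
    exact Prod.ext (WithZero.coe_inj.mp (congrArg Prod.fst h3))
      (WithZero.coe_inj.mp (congrArg Prod.snd h3))
  -- equivariance
  have hιact : ∀ (w : X' × M) (m : M),
      ι (FreeAct M X' w m) = FreeAct (WithZero M) X (ι w) ↑m := by
    intro w m
    show (w.1.1, (↑(w.2 * m) : WithZero M)) = (w.1.1, (w.2 : WithZero M) * (m : WithZero M))
    rw [WithZero.coe_mul]
  have hequiv' : ∀ (w : X' × M) (m : M), π' (FreeAct M X' w m) = DiagAct M (π' w) m := by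
    intro w m
    have h3 : ((↑(π' (FreeAct M X' w m)).1 : WithZero M), (↑(π' (FreeAct M X' w m)).2 : WithZero M))
        = (↑((DiagAct M (π' w) m)).1, ↑((DiagAct M (π' w) m)).2) := by
      rw [← hπ', hιact, hequiv, hπ' w]
      show ((↑(π' w).1 * ↑m : WithZero M), (↑(π' w).2 * ↑m : WithZero M)) = _
      rw [← WithZero.coe_mul, ← WithZero.coe_mul]
      rfl
    exact Prod.ext (WithZero.coe_inj.mp (congrArg Prod.fst h3))
      (WithZero.coe_inj.mp (congrArg Prod.snd h3))
  -- relations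
  let R' : Set ((X' × M) × (X' × M)) := (fun pq : (X' × M) × (X' × M) => (ι pq.1, ι pq.2)) ⁻¹' R
  have hinj2 : Function.Injective (fun pq : (X' × M) × (X' × M) => (ι pq.1, ι pq.2)) := by
    rintro ⟨a, b⟩ ⟨c, d⟩ hcd
    exact Prod.ext (hιinj (congrArg Prod.fst hcd)) (hιinj (congrArg Prod.snd hcd))
  have hR'fin : R'.Finite := hRfin.preimage (Function.Injective.injOn hinj2)
  -- easy kernel direction
  have hker₁ : ∀ w₁ w₂, CongGen (FreeAct M X') R' w₁ w₂ → π' w₁ = π' w₂ := by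
    intro w₁ w₂ hc
    refine hc (fun a b => π' a = π' b) ⟨fun _ => rfl, Eq.symm, Eq.trans⟩ ?_ ?_
    · intro a b m hab
      rw [hequiv', hequiv', hab]
    · rintro ⟨p, q⟩ hpq
      exact (hπ'iff p q).mpr ((hker _ _).mpr (congGen_of_mem' hpq))
  -- hard kernel direction
  have hker₂ : ∀ w₁ w₂, π' w₁ = π' w₂ → CongGen (FreeAct M X') R' w₁ w₂ := by
    intro w₁ w₂ hp
    have hcg : CongGen (FreeAct (WithZero M) X) R (ι w₁) (ι w₂) :=
      (hker _ _).mp ((hπ'iff w₁ w₂).mp hp)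
    refine (hcg (fun a b => π a = π b ∧ ∀ a' b', ι a' = a → ι b' = b →
        CongGen (FreeAct M X') R' a' b') ?_ ?_ ?_).2 w₁ w₂ rfl rfl
    · -- Equivalence
      constructor
      · intro a
        refine ⟨rfl, fun a' b' ha hb => ?_⟩
        have : a' = b' := hιinj (ha.trans hb.symm)
        subst this
        exact congGen_refl _
      · rintro a b ⟨h1, h2⟩
        exact ⟨h1.symm, fun a' b' ha hb => congGen_symm (h2 b' a' hb ha)⟩
      · rintro a b c ⟨h1, h2⟩ ⟨h3, h4⟩
        refine ⟨h1.trans h3, fun a' c' ha hc => ?_⟩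
        -- construct a preimage of b
        have hπb1 : (π b).1 ≠ 0 := by
          rw [← h1, ← ha, hπ' a']
          exact WithZero.coe_ne_zero
        have hπb2 : (π b).2 ≠ 0 := by
          rw [← h1, ← ha, hπ' a']
          exact WithZero.coe_ne_zero
        have hkb : π b = DiagAct (WithZero M) (π (b.1, 1)) b.2 := key b.1 b.2
        have hb2 : b.2 ≠ 0 := by
          intro h0
          apply hπb1
          have h5 : (π b).1 = (π (b.1, 1)).1 * b.2 := congrArg Prod.fst hkb
          rw [h5, h0, mul_zero]
        obtain ⟨b₂, hb₂⟩ := coe_of_ne b.2 hb2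
        have hbx : (π (b.1, 1)).1 ≠ 0 ∧ (π (b.1, 1)).2 ≠ 0 := by
          have h5 : (π b).1 = (π (b.1, 1)).1 * b.2 := congrArg Prod.fst hkb
          have h6 : (π b).2 = (π (b.1, 1)).2 * b.2 := congrArg Prod.snd hkb
          exact ⟨mulNeZeroLeft (by rw [← h5]; exact hπb1),
            mulNeZeroLeft (by rw [← h6]; exact hπb2)⟩
        have hbb : ι (⟨b.1, hbx⟩, b₂) = b := by
          show (b.1, (b₂ : WithZero M)) = b
          rw [← hb₂]
        exact congGen_trans (h2 a' _ ha hbb) (h4 _ c' hbb hc)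
    · -- closed under the action
      rintro a b m ⟨h1, h2⟩
      rcases WithZero.zeroOrCoe m with rfl | ⟨m₀, rfl⟩
      · refine ⟨by rw [hequiv, hequiv, h1], fun a' b' ha hb => ?_⟩
        exfalso
        have h3 : (a'.2 : WithZero M) = a.2 * 0 := congrArg Prod.snd ha
        rw [mul_zero] at h3
        exact WithZero.coe_ne_zero h3
      · refine ⟨by rw [hequiv, hequiv, h1], fun a' b' ha hb => ?_⟩
        have ha2 : a.2 * ↑m₀ = (a'.2 : WithZero M) := (congrArg Prod.snd ha).symm
        have ha2ne : a.2 ≠ 0 :=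
          mulNeZeroLeft (by rw [ha2]; exact WithZero.coe_ne_zero)
        obtain ⟨a₂, ha₂⟩ := coe_of_ne a.2 ha2ne
        have hb2' : b.2 * ↑m₀ = (b'.2 : WithZero M) := (congrArg Prod.snd hb).symm
        have hb2ne : b.2 ≠ 0 :=
          mulNeZeroLeft (by rw [hb2']; exact WithZero.coe_ne_zero)
        obtain ⟨b₂, hb₂⟩ := coe_of_ne b.2 hb2ne
        have hπa : π (ι a') = DiagAct (WithZero M) (π a) ↑m₀ := by
          rw [ha]; exact hequiv a _
        have hπa1' : (π (ι a')).1 = (π a).1 * ↑m₀ := congrArg Prod.fst hπa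
        have hπa2' : (π (ι a')).2 = (π a).2 * ↑m₀ := congrArg Prod.snd hπa
        have hπa1 : (π a).1 ≠ 0 := by
          apply mulNeZeroLeft (v := (↑m₀ : WithZero M))
          rw [← hπa1', hπ' a']
          exact WithZero.coe_ne_zero
        have hπa2 : (π a).2 ≠ 0 := by
          apply mulNeZeroLeft (v := (↑m₀ : WithZero M))
          rw [← hπa2', hπ' a']
          exact WithZero.coe_ne_zero
        have hπb1 : (π b).1 ≠ 0 := by rw [← h1]; exact hπa1
        have hπb2 : (π b).2 ≠ 0 := by rw [← h1]; exact hπa2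
        have hka : π a = DiagAct (WithZero M) (π (a.1, 1)) a.2 := key a.1 a.2
        have hkb : π b = DiagAct (WithZero M) (π (b.1, 1)) b.2 := key b.1 b.2
        have hka1 : (π a).1 = (π (a.1, 1)).1 * a.2 := congrArg Prod.fst hka
        have hka2 : (π a).2 = (π (a.1, 1)).2 * a.2 := congrArg Prod.snd hka
        have hkb1 : (π b).1 = (π (b.1, 1)).1 * b.2 := congrArg Prod.fst hkb
        have hkb2 : (π b).2 = (π (b.1, 1)).2 * b.2 := congrArg Prod.snd hkb
        have hax : (π (a.1, 1)).1 ≠ 0 ∧ (π (a.1, 1)).2 ≠ 0 :=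
          ⟨mulNeZeroLeft (by rw [← hka1]; exact hπa1),
           mulNeZeroLeft (by rw [← hka2]; exact hπa2)⟩
        have hbx : (π (b.1, 1)).1 ≠ 0 ∧ (π (b.1, 1)).2 ≠ 0 :=
          ⟨mulNeZeroLeft (by rw [← hkb1]; exact hπb1),
           mulNeZeroLeft (by rw [← hkb2]; exact hπb2)⟩
        have hιa : ι (⟨a.1, hax⟩, a₂) = a := by
          show (a.1, (a₂ : WithZero M)) = a
          rw [← ha₂]
        have hιb : ι (⟨b.1, hbx⟩, b₂) = b := by
          show (b.1, (b₂ : WithZero M)) = b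
          rw [← hb₂]
        have hcg' := congGen_act (h2 (⟨a.1, hax⟩, a₂) (⟨b.1, hbx⟩, b₂) hιa hιb) m₀
        have e1 : a' = FreeAct M X' (⟨a.1, hax⟩, a₂) m₀ := by
          apply hιinj
          rw [ha, hιact]
          show FreeAct (WithZero M) X a ↑m₀ = FreeAct (WithZero M) X (a.1, (a₂ : WithZero M)) ↑m₀
          rw [← ha₂]
        have e2 : b' = FreeAct M X' (⟨b.1, hbx⟩, b₂) m₀ := by
          apply hιinj
          rw [hb, hιact]
          show FreeAct (WithZero M) X b ↑m₀ = FreeAct (WithZero M) X (b.1, (b₂ : WithZero M)) ↑m₀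
          rw [← hb₂]
        rw [e1, e2]
        exact hcg'
    · -- contains R
      rintro ⟨p, q⟩ hpq
      refine ⟨(hker _ _).mpr (congGen_of_mem' hpq), fun p' q' hp' hq' => ?_⟩
      refine congGen_of_mem' (show (ι p', ι q') ∈ R from ?_)
      rw [hp', hq']
      exact hpq
  exact ⟨X', inferInstance, R', hR'fin, π', hsurj', hequiv',
    fun w₁ w₂ => ⟨hker₂ w₁ w₂, hker₁ w₁ w₂⟩⟩

/-- The diagonal `M`-act is finitely presented if and only if the diagonal `M⁰`-act
is finitely presented, where `M⁰ = WithZero M` is `M` with a zero adjoined. -/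
theorem stmt5 {M : Type*} [Monoid M] :
    ActFP M (DiagAct M) ↔ ActFP (WithZero M) (DiagAct (WithZero M)) := by
  exact ⟨forward_dir, backward_dir⟩
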